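/- Let k ≥ 1 and suppose at time t₀ all vertices of a k-principal-square of the grid are blue under probabilistic zero forcing. Then with probability 1 - o(1/n), at time t₀ + 6 ln n all vertices of the (k+1)-principal-square are blue. -/

import Mathlib

open Finset

/-- The probability that a white vertex `v` is forced (turned blue) in one round of
probabilistic zero forcing, given the current blue set `Z`:
each blue neighbour `u` of `v` independently forces `v` with probability `|N[u] ∩ Z| / deg u`. -/
noncomputable def forceProb {V : Type} [Fintype V] [DecidableEq V]
    (G : SimpleGraph V) [DecidableRel G.Adj] (Z : Finset V) (v : V) : ℝ :=
  1 - ∏ u ∈ Z.filter (fun u => G.Adj u v),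
        (1 - (((insert u (G.neighborFinset u)) ∩ Z).card : ℝ) / (G.degree u : ℝ))

/-- Transition probability of one round of probabilistic zero forcing:
from blue set `Z` to blue set `Z'`.  Distinct white vertices are forced independently. -/
noncomputable def stepProb {V : Type} [Fintype V] [DecidableEq V]
    (G : SimpleGraph V) [DecidableRel G.Adj] (Z Z' : Finset V) : ℝ :=
  if Z ⊆ Z' then
    ∏ v ∈ Zᶜ, (if v ∈ Z' then forceProb G Z v else 1 - forceProb G Z v)
  else 0

/-- `pzfProb G t Z Z'` is the probability that, starting from blue set `Z`,
after `t` rounds of probabilistic zero forcing the blue set is exactly `Z'`. -/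
noncomputable def pzfProb {V : Type} [Fintype V] [DecidableEq V]
    (G : SimpleGraph V) [DecidableRel G.Adj] : ℕ → Finset V → Finset V → ℝ
  | 0, Z, Z' => if Z' = Z then 1 else 0
  | (t+1), Z, Z' => ∑ W : Finset V, stepProb G Z W * pzfProb G t W Z'

/-- The `m × n` grid graph: the Cartesian product of a path on `m` vertices
and a path on `n` vertices. -/
def gridGraph (m n : ℕ) : SimpleGraph (Fin m × Fin n) :=
  SimpleGraph.fromRel (fun p q =>
    (p.1 = q.1 ∧ p.2.val + 1 = q.2.val) ∨ (p.2 = q.2 ∧ p.1.val + 1 = q.1.val))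

instance gridGraph.adjDecidable (m n : ℕ) : DecidableRel (gridGraph m n).Adj := fun p q =>
  decidable_of_iff (p ≠ q ∧
      (((p.1 = q.1 ∧ p.2.val + 1 = q.2.val) ∨ (p.2 = q.2 ∧ p.1.val + 1 = q.1.val)) ∨
       ((q.1 = p.1 ∧ q.2.val + 1 = p.2.val) ∨ (q.2 = p.2 ∧ q.1.val + 1 = p.1.val)))) Iff.rfl

/-- The `k`-principal-square of the `(2M+1) × (2M+1)` grid: the `(2k+1) × (2k+1)` sub-grid
centred on the origin `(M, M)`. -/
def psq (n M k : ℕ) : Finset (Fin n × Fin n) :=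
  Finset.univ.filter (fun p =>
    (M ≤ p.1.val + k ∧ p.1.val ≤ M + k) ∧ (M ≤ p.2.val + k ∧ p.2.val ≤ M + k))

section General

variable {V : Type} [Fintype V] [DecidableEq V] (G : SimpleGraph V) [DecidableRel G.Adj]

lemma card_inter_le_degree {Z : Finset V} {u v : V} (huv : G.Adj u v) (hv : v ∉ Z) :
    ((insert u (G.neighborFinset u)) ∩ Z).card ≤ G.degree u := by
  have hvmem : v ∈ insert u (G.neighborFinset u) :=
    mem_insert_of_mem ((SimpleGraph.mem_neighborFinset _ _ _).2 huv)
  have hsub : (insert u (G.neighborFinset u)) ∩ Z ⊆ (insert u (G.neighborFinset u)).erase v := by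
    intro x hx
    rcases mem_inter.1 hx with ⟨hx1, hx2⟩
    exact mem_erase.2 ⟨fun h => hv (h ▸ hx2), hx1⟩
  have hnotmem : u ∉ G.neighborFinset u := by
    simp [SimpleGraph.mem_neighborFinset]
  calc ((insert u (G.neighborFinset u)) ∩ Z).card
      ≤ ((insert u (G.neighborFinset u)).erase v).card := card_le_card hsub
    _ = (insert u (G.neighborFinset u)).card - 1 := card_erase_of_mem hvmem
    _ = (G.degree u + 1) - 1 := by rw [card_insert_of_notMem hnotmem]; rfl
    _ = G.degree u := by omega

lemma factor_nonneg {Z : Finset V} {u v : V} (huv : G.Adj u v) (hv : v ∉ Z) :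
    0 ≤ 1 - (((insert u (G.neighborFinset u)) ∩ Z).card : ℝ) / (G.degree u : ℝ) := by
  have hdegpos : 0 < G.degree u := by
    have : v ∈ G.neighborFinset u := (SimpleGraph.mem_neighborFinset _ _ _).2 huv
    exact card_pos.2 ⟨v, this⟩
  have h := card_inter_le_degree G huv hv
  have : (((insert u (G.neighborFinset u)) ∩ Z).card : ℝ) / (G.degree u : ℝ) ≤ 1 := by
    rw [div_le_one (by exact_mod_cast hdegpos)]
    exact_mod_cast h
  linarith

lemma factor_le_one {Z : Finset V} (u : V) :
    1 - (((insert u (G.neighborFinset u)) ∩ Z).card : ℝ) / (G.degree u : ℝ) ≤ 1 := by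
  have : (0:ℝ) ≤ (((insert u (G.neighborFinset u)) ∩ Z).card : ℝ) / (G.degree u : ℝ) :=
    div_nonneg (by positivity) (by positivity)
  linarith

lemma forceProb_nonneg {Z : Finset V} {v : V} (hv : v ∉ Z) : 0 ≤ forceProb G Z v := by
  unfold forceProb
  have : ∏ u ∈ Z.filter (fun u => G.Adj u v),
      (1 - (((insert u (G.neighborFinset u)) ∩ Z).card : ℝ) / (G.degree u : ℝ)) ≤ 1 := by
    apply Finset.prod_le_one
    · intro u hu
      exact factor_nonneg G (mem_filter.1 hu).2 hv
    · intro u hu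
      exact factor_le_one G u
  linarith

lemma forceProb_le_one {Z : Finset V} {v : V} (hv : v ∉ Z) : forceProb G Z v ≤ 1 := by
  unfold forceProb
  have : (0:ℝ) ≤ ∏ u ∈ Z.filter (fun u => G.Adj u v),
      (1 - (((insert u (G.neighborFinset u)) ∩ Z).card : ℝ) / (G.degree u : ℝ)) := by
    apply Finset.prod_nonneg
    intro u hu
    exact factor_nonneg G (mem_filter.1 hu).2 hv
  linarith

lemma forceProb_ge {Z : Finset V} {u v : V} (m : ℕ) (hu : u ∈ Z) (huv : G.Adj u v)
    (hv : v ∉ Z) (hm : m ≤ ((insert u (G.neighborFinset u)) ∩ Z).card)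
    (hd : G.degree u ≤ 4) : (m : ℝ) / 4 ≤ forceProb G Z v := by
  unfold forceProb
  have humem : u ∈ Z.filter (fun u => G.Adj u v) := mem_filter.2 ⟨hu, huv⟩
  have hdegpos : 0 < G.degree u := by
    have : v ∈ G.neighborFinset u := (SimpleGraph.mem_neighborFinset _ _ _).2 huv
    exact card_pos.2 ⟨v, this⟩
  have hm' : (m : ℝ) ≤ (((insert u (G.neighborFinset u)) ∩ Z).card : ℝ) := by exact_mod_cast hm
  have hd' : (G.degree u : ℝ) ≤ 4 := by exact_mod_cast hd
  have hdp : (0:ℝ) < (G.degree u : ℝ) := by exact_mod_cast hdegpos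
  have hdiv : (m : ℝ) / 4 ≤ (((insert u (G.neighborFinset u)) ∩ Z).card : ℝ) / (G.degree u : ℝ) := by
    rw [div_le_div_iff₀ (by norm_num) hdp]
    exact mul_le_mul hm' hd' (le_of_lt hdp) (by positivity)
  have hfu : 1 - (((insert u (G.neighborFinset u)) ∩ Z).card : ℝ) / (G.degree u : ℝ)
      ≤ 1 - (m : ℝ) / 4 := by linarith
  have hprod : ∏ w ∈ Z.filter (fun u => G.Adj u v),
      (1 - (((insert w (G.neighborFinset w)) ∩ Z).card : ℝ) / (G.degree w : ℝ)) ≤ 1 - (m:ℝ)/4 := by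
    rw [← Finset.mul_prod_erase _ _ humem]
    have h1 : ∏ w ∈ (Z.filter (fun u => G.Adj u v)).erase u,
        (1 - (((insert w (G.neighborFinset w)) ∩ Z).card : ℝ) / (G.degree w : ℝ)) ≤ 1 := by
      apply Finset.prod_le_one
      · intro w hw
        exact factor_nonneg G (mem_filter.1 (mem_of_mem_erase hw)).2 hv
      · intro w hw
        exact factor_le_one G w
    have h1' : (0:ℝ) ≤ ∏ w ∈ (Z.filter (fun u => G.Adj u v)).erase u,
        (1 - (((insert w (G.neighborFinset w)) ∩ Z).card : ℝ) / (G.degree w : ℝ)) := by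
      apply Finset.prod_nonneg
      intro w hw
      exact factor_nonneg G (mem_filter.1 (mem_of_mem_erase hw)).2 hv
    have h0 : 0 ≤ 1 - (((insert u (G.neighborFinset u)) ∩ Z).card : ℝ) / (G.degree u : ℝ) :=
      factor_nonneg G huv hv
    nlinarith
  linarith

lemma sum_ind (p : V → ℝ) (T : Finset V) :
    ∑ S ∈ T.powerset, ∏ v ∈ T, (if v ∈ S then p v else 1 - p v) = 1 := by
  calc ∑ S ∈ T.powerset, ∏ v ∈ T, (if v ∈ S then p v else 1 - p v)
      = ∑ S ∈ T.powerset, (∏ i ∈ S, p i) * ∏ i ∈ T \ S, (1 - p i) := by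
        apply Finset.sum_congr rfl
        intro S hS
        have hS' : S ⊆ T := mem_powerset.1 hS
        rw [Finset.prod_ite, Finset.filter_mem_eq_inter, inter_eq_right.2 hS',
          ← Finset.sdiff_eq_filter]
    _ = ∏ i ∈ T, (p i + (1 - p i)) := (Finset.prod_add p (fun v => 1 - p v) T).symm
    _ = 1 := by apply Finset.prod_eq_one; intro i _; ring

lemma stepProb_nonneg (Z Z' : Finset V) : 0 ≤ stepProb G Z Z' := by
  unfold stepProb
  split
  · apply Finset.prod_nonneg
    intro v hv
    have hv' : v ∉ Z := by simpa using hv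
    split
    · exact forceProb_nonneg G hv'
    · have := forceProb_le_one G hv'; linarith
  · exact le_refl _

lemma stepProb_eq_zero {Z Z' : Finset V} (h : ¬ Z ⊆ Z') : stepProb G Z Z' = 0 := by
  unfold stepProb; rw [if_neg h]

lemma stepProb_sum (Z : Finset V) : ∑ Z' : Finset V, stepProb G Z Z' = 1 := by
  rw [← Finset.sum_filter_add_sum_filter_not univ (fun Z' : Finset V => Z ⊆ Z')]
  have h2 : ∑ Z' ∈ univ.filter (fun Z' : Finset V => ¬ Z ⊆ Z'), stepProb G Z Z' = 0 := by
    apply Finset.sum_eq_zero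
    intro Z' hZ'
    exact stepProb_eq_zero G (mem_filter.1 hZ').2
  rw [h2, add_zero]
  have h1 : ∑ Z' ∈ univ.filter (fun Z' : Finset V => Z ⊆ Z'), stepProb G Z Z' =
      ∑ S ∈ Zᶜ.powerset, ∏ v ∈ Zᶜ,
        (if v ∈ S then forceProb G Z v else 1 - forceProb G Z v) := by
    apply Finset.sum_nbij' (fun Z' => Z' \ Z) (fun S => Z ∪ S)
    · intro Z' hZ'
      rw [mem_powerset]
      intro x hx
      rw [mem_compl]
      exact (mem_sdiff.1 hx).2
    · intro S hS
      simp only [mem_filter, mem_univ, true_and]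
      exact subset_union_left
    · intro Z' hZ'
      exact union_sdiff_of_subset (mem_filter.1 hZ').2
    · intro S hS
      apply union_sdiff_cancel_left
      rw [Finset.disjoint_left]
      intro x hxZ hxS
      exact (mem_compl.1 (mem_powerset.1 hS hxS)) hxZ
    · intro Z' hZ'
      unfold stepProb
      rw [if_pos (mem_filter.1 hZ').2]
      apply Finset.prod_congr rfl
      intro v hv
      have hvZ : v ∉ Z := mem_compl.1 hv
      by_cases hvZ' : v ∈ Z'
      · rw [if_pos hvZ', if_pos (mem_sdiff.2 ⟨hvZ', hvZ⟩)]
      · rw [if_neg hvZ', if_neg (fun h => hvZ' (mem_sdiff.1 h).1)]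
  rw [h1]
  exact sum_ind (forceProb G Z) Zᶜ

lemma stepProb_sum_not_mem {Z : Finset V} {v : V} (hv : v ∉ Z) :
    ∑ Z' ∈ univ.filter (fun Z' : Finset V => v ∉ Z'), stepProb G Z Z' =
      1 - forceProb G Z v := by
  rw [← Finset.sum_filter_add_sum_filter_not (univ.filter (fun Z' : Finset V => v ∉ Z'))
    (fun Z' : Finset V => Z ⊆ Z')]
  have h2 : ∑ Z' ∈ (univ.filter (fun Z' : Finset V => v ∉ Z')).filter
      (fun Z' : Finset V => ¬ Z ⊆ Z'), stepProb G Z Z' = 0 := by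
    apply Finset.sum_eq_zero
    intro Z' hZ'
    exact stepProb_eq_zero G (mem_filter.1 hZ').2
  rw [h2, add_zero]
  have hvc : v ∈ Zᶜ := mem_compl.2 hv
  have h1 : ∑ Z' ∈ (univ.filter (fun Z' : Finset V => v ∉ Z')).filter
      (fun Z' : Finset V => Z ⊆ Z'), stepProb G Z Z' =
      ∑ S ∈ (Zᶜ.erase v).powerset, (1 - forceProb G Z v) * ∏ u ∈ Zᶜ.erase v,
        (if u ∈ S then forceProb G Z u else 1 - forceProb G Z u) := by
    apply Finset.sum_nbij' (fun Z' => Z' \ Z) (fun S => Z ∪ S)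
    · intro Z' hZ'
      rw [mem_powerset]
      intro x hx
      have h3 := mem_filter.1 (mem_filter.1 hZ').1
      exact mem_erase.2 ⟨fun h => h3.2 (h ▸ (mem_sdiff.1 hx).1), mem_compl.2 (mem_sdiff.1 hx).2⟩
    · intro S hS
      have hS' := mem_powerset.1 hS
      simp only [mem_filter, mem_univ, true_and, mem_union]
      refine ⟨?_, subset_union_left⟩
      rintro (h | h)
      · exact hv h
      · exact (mem_erase.1 (hS' h)).1 rfl
    · intro Z' hZ'
      exact union_sdiff_of_subset (mem_filter.1 hZ').2
    · intro S hS
      apply union_sdiff_cancel_left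
      rw [Finset.disjoint_left]
      intro x hxZ hxS
      exact (mem_compl.1 (mem_erase.1 (mem_powerset.1 hS hxS)).2) hxZ
    · intro Z' hZ'
      have hsub := (mem_filter.1 hZ').2
      have hvZ' : v ∉ Z' := (mem_filter.1 (mem_filter.1 hZ').1).2
      unfold stepProb
      rw [if_pos hsub, ← Finset.mul_prod_erase _ _ hvc, if_neg hvZ']
      congr 1
      apply Finset.prod_congr rfl
      intro u hu
      have huZ : u ∉ Z := mem_compl.1 (mem_of_mem_erase hu)
      by_cases huZ' : u ∈ Z'
      · rw [if_pos huZ', if_pos (mem_sdiff.2 ⟨huZ', huZ⟩)]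
      · rw [if_neg huZ', if_neg (fun h => huZ' (mem_sdiff.1 h).1)]
  rw [h1, ← Finset.mul_sum, sum_ind (forceProb G Z) (Zᶜ.erase v), mul_one]

lemma pzfProb_succ (t : ℕ) (Z Z' : Finset V) :
    pzfProb G (t+1) Z Z' = ∑ W : Finset V, stepProb G Z W * pzfProb G t W Z' := rfl

lemma pzfProb_nonneg : ∀ (t : ℕ) (Z Z' : Finset V), 0 ≤ pzfProb G t Z Z'
  | 0, Z, Z' => by unfold pzfProb; split <;> norm_num
  | (t+1), Z, Z' => by
    unfold pzfProb
    apply Finset.sum_nonneg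
    intro W _
    exact mul_nonneg (stepProb_nonneg G Z W) (pzfProb_nonneg t W Z')

lemma pzfProb_eq_zero : ∀ (t : ℕ) {Z Z' : Finset V}, ¬ Z ⊆ Z' → pzfProb G t Z Z' = 0
  | 0, Z, Z' => by
    intro h
    unfold pzfProb
    rw [if_neg (fun he => h (by rw [he]))]
  | (t+1), Z, Z' => by
    intro h
    unfold pzfProb
    apply Finset.sum_eq_zero
    intro W _
    by_cases hZW : Z ⊆ W
    · have : ¬ W ⊆ Z' := fun hc => h (hZW.trans hc)
      rw [pzfProb_eq_zero t this, mul_zero]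
    · rw [stepProb_eq_zero G hZW, zero_mul]

lemma pzfProb_sum : ∀ (t : ℕ) (Z : Finset V), ∑ Z' : Finset V, pzfProb G t Z Z' = 1
  | 0, Z => by
    unfold pzfProb
    rw [Finset.sum_ite_eq' univ Z (fun _ => (1:ℝ))]
    simp
  | (t+1), Z => by
    unfold pzfProb
    rw [Finset.sum_comm]
    calc ∑ W : Finset V, ∑ Z' : Finset V, stepProb G Z W * pzfProb G t W Z'
        = ∑ W : Finset V, stepProb G Z W * ∑ Z' : Finset V, pzfProb G t W Z' := by
          apply Finset.sum_congr rfl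
          intro W _
          rw [Finset.mul_sum]
      _ = ∑ W : Finset V, stepProb G Z W := by
          apply Finset.sum_congr rfl
          intro W _
          rw [pzfProb_sum t W, mul_one]
      _ = 1 := stepProb_sum G Z

/-- Probability that `v` is still white after `t` rounds starting from `Z`. -/
noncomputable def badProb (t : ℕ) (Z : Finset V) (v : V) : ℝ :=
  ∑ Z' ∈ univ.filter (fun Z' : Finset V => v ∉ Z'), pzfProb G t Z Z'

lemma badProb_nonneg (t : ℕ) (Z : Finset V) (v : V) : 0 ≤ badProb G t Z v :=
  Finset.sum_nonneg fun Z' _ => pzfProb_nonneg G t Z Z'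

lemma badProb_le_one (t : ℕ) (Z : Finset V) (v : V) : badProb G t Z v ≤ 1 := by
  unfold badProb
  calc ∑ Z' ∈ univ.filter (fun Z' : Finset V => v ∉ Z'), pzfProb G t Z Z'
      ≤ ∑ Z' : Finset V, pzfProb G t Z Z' := by
        apply Finset.sum_le_sum_of_subset_of_nonneg (filter_subset _ _)
        intro Z' _ _
        exact pzfProb_nonneg G t Z Z'
    _ = 1 := pzfProb_sum G t Z

lemma badProb_zero_of_mem {Z : Finset V} {v : V} (t : ℕ) (hv : v ∈ Z) :
    badProb G t Z v = 0 := by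
  unfold badProb
  apply Finset.sum_eq_zero
  intro Z' hZ'
  have hvZ' : v ∉ Z' := (mem_filter.1 hZ').2
  exact pzfProb_eq_zero G t (fun hc => hvZ' (hc hv))

lemma badProb_succ (t : ℕ) (Z : Finset V) (v : V) :
    badProb G (t+1) Z v = ∑ W : Finset V, stepProb G Z W * badProb G t W v := by
  unfold badProb
  simp only [pzfProb_succ]
  rw [Finset.sum_comm]
  apply Finset.sum_congr rfl
  intro W _
  rw [Finset.mul_sum]

lemma badProb_le_geom {v : V} {r : ℝ} (hr0 : 0 ≤ r) (hr1 : r ≤ 1) (P : Finset V → Prop)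
    (hmono : ∀ ⦃Z W : Finset V⦄, P Z → Z ⊆ W → P W)
    (hforce : ∀ Z : Finset V, P Z → v ∉ Z → r ≤ forceProb G Z v) :
    ∀ (t : ℕ) (Z : Finset V), P Z → badProb G t Z v ≤ (1 - r)^t := by
  intro t
  induction t with
  | zero =>
    intro Z hZ
    rw [pow_zero]
    exact badProb_le_one G 0 Z v
  | succ t ih =>
    intro Z hZ
    by_cases hvZ : v ∈ Z
    · rw [badProb_zero_of_mem G _ hvZ]
      exact pow_nonneg (by linarith) _
    · rw [badProb_succ]
      rw [← Finset.sum_filter_add_sum_filter_not univ (fun W : Finset V => v ∈ W)]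
      have hfirst : ∑ W ∈ univ.filter (fun W : Finset V => v ∈ W),
          stepProb G Z W * badProb G t W v = 0 := by
        apply Finset.sum_eq_zero
        intro W hW
        rw [badProb_zero_of_mem G t (mem_filter.1 hW).2, mul_zero]
      rw [hfirst, zero_add]
      have hpow : (0:ℝ) ≤ (1-r)^t := pow_nonneg (by linarith) _
      calc ∑ W ∈ univ.filter (fun W : Finset V => v ∉ W), stepProb G Z W * badProb G t W v
          ≤ ∑ W ∈ univ.filter (fun W : Finset V => v ∉ W), stepProb G Z W * (1-r)^t := by
            apply Finset.sum_le_sum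
            intro W hW
            by_cases hstep : stepProb G Z W = 0
            · rw [hstep, zero_mul, zero_mul]
            · have hZW : Z ⊆ W := by
                by_contra hc
                exact hstep (stepProb_eq_zero G hc)
              exact mul_le_mul_of_nonneg_left (ih W (hmono hZ hZW)) (stepProb_nonneg G Z W)
        _ = (∑ W ∈ univ.filter (fun W : Finset V => v ∉ W), stepProb G Z W) * (1-r)^t :=
            (Finset.sum_mul _ _ _).symm
        _ = (1 - forceProb G Z v) * (1-r)^t := by rw [stepProb_sum_not_mem G hvZ]
        _ ≤ (1 - r) * (1-r)^t := by
            apply mul_le_mul_of_nonneg_right _ hpow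
            have := hforce Z hZ hvZ
            linarith
        _ = (1 - r)^(t+1) := by rw [pow_succ, mul_comm]

lemma badProb_corner {u v : V} (S : Finset V)
    (hu : ∀ Z : Finset V, S ⊆ Z → u ∉ Z → 3/4 ≤ forceProb G Z u)
    (hv : ∀ Z : Finset V, S ⊆ Z → u ∈ Z → v ∉ Z → 1/2 ≤ forceProb G Z v) :
    ∀ (t : ℕ) (Z : Finset V), S ⊆ Z →
      badProb G t Z v ≤ 2 * ((t:ℝ)+1) * (1/2)^t := by
  have key : ∀ (t : ℕ) (Z : Finset V), S ⊆ Z ∧ u ∈ Z → badProb G t Z v ≤ ((1:ℝ) - 1/2)^t := by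
    apply badProb_le_geom G (by norm_num) (by norm_num)
      (P := fun Z : Finset V => S ⊆ Z ∧ u ∈ Z)
    · intro Z W hZ hZW
      exact ⟨hZ.1.trans hZW, hZW hZ.2⟩
    · intro Z hZ hvZ
      exact hv Z hZ.1 hZ.2 hvZ
  have key' : ∀ (t : ℕ) (Z : Finset V), S ⊆ Z → u ∈ Z → badProb G t Z v ≤ ((1:ℝ)/2)^t := by
    intro t Z h1 h2
    have := key t Z ⟨h1, h2⟩
    norm_num at this ⊢
    convert this using 2
  intro t
  induction t with
  | zero =>
    intro Z hZ
    rw [pow_zero]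
    have := badProb_le_one G 0 Z v
    norm_num
    linarith
  | succ t ih =>
    intro Z hZ
    by_cases hvZ : v ∈ Z
    · rw [badProb_zero_of_mem G _ hvZ]
      positivity
    · rw [badProb_succ]
      rw [← Finset.sum_filter_add_sum_filter_not univ (fun W : Finset V => u ∈ W)]
      have hpow : (0:ℝ) ≤ (1/2)^t := by positivity
      have hfirst : ∑ W ∈ univ.filter (fun W : Finset V => u ∈ W),
          stepProb G Z W * badProb G t W v ≤ (1/2)^t := by
        calc ∑ W ∈ univ.filter (fun W : Finset V => u ∈ W), stepProb G Z W * badProb G t W v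
            ≤ ∑ W ∈ univ.filter (fun W : Finset V => u ∈ W), stepProb G Z W * (1/2)^t := by
              apply Finset.sum_le_sum
              intro W hW
              by_cases hstep : stepProb G Z W = 0
              · rw [hstep, zero_mul, zero_mul]
              · have hZW : Z ⊆ W := by
                  by_contra hc
                  exact hstep (stepProb_eq_zero G hc)
                exact mul_le_mul_of_nonneg_left
                  (key' t W (hZ.trans hZW) (mem_filter.1 hW).2) (stepProb_nonneg G Z W)
          _ = (∑ W ∈ univ.filter (fun W : Finset V => u ∈ W), stepProb G Z W) * (1/2)^t :=
              (Finset.sum_mul _ _ _).symm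
          _ ≤ 1 * (1/2)^t := by
              apply mul_le_mul_of_nonneg_right _ hpow
              calc ∑ W ∈ univ.filter (fun W : Finset V => u ∈ W), stepProb G Z W
                  ≤ ∑ W : Finset V, stepProb G Z W := by
                    apply Finset.sum_le_sum_of_subset_of_nonneg (filter_subset _ _)
                    intro W _ _
                    exact stepProb_nonneg G Z W
                _ = 1 := stepProb_sum G Z
          _ = (1/2)^t := one_mul _
      have hsecond : ∑ W ∈ univ.filter (fun W : Finset V => u ∉ W),
          stepProb G Z W * badProb G t W v ≤ (1/4) * (2 * ((t:ℝ)+1) * (1/2)^t) := by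
        have hbnd : (0:ℝ) ≤ 2 * ((t:ℝ)+1) * (1/2)^t := by positivity
        calc ∑ W ∈ univ.filter (fun W : Finset V => u ∉ W), stepProb G Z W * badProb G t W v
            ≤ ∑ W ∈ univ.filter (fun W : Finset V => u ∉ W),
                stepProb G Z W * (2 * ((t:ℝ)+1) * (1/2)^t) := by
              apply Finset.sum_le_sum
              intro W hW
              by_cases hstep : stepProb G Z W = 0
              · rw [hstep, zero_mul, zero_mul]
              · have hZW : Z ⊆ W := by
                  by_contra hc
                  exact hstep (stepProb_eq_zero G hc)
                exact mul_le_mul_of_nonneg_left (ih W (hZ.trans hZW)) (stepProb_nonneg G Z W)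
          _ = (∑ W ∈ univ.filter (fun W : Finset V => u ∉ W), stepProb G Z W) *
                (2 * ((t:ℝ)+1) * (1/2)^t) := (Finset.sum_mul _ _ _).symm
          _ ≤ (1/4) * (2 * ((t:ℝ)+1) * (1/2)^t) := by
              apply mul_le_mul_of_nonneg_right _ hbnd
              by_cases huZ : u ∈ Z
              · have : ∑ W ∈ univ.filter (fun W : Finset V => u ∉ W), stepProb G Z W = 0 := by
                  apply Finset.sum_eq_zero
                  intro W hW
                  apply stepProb_eq_zero
                  intro hc
                  exact (mem_filter.1 hW).2 (hc huZ)
                rw [this]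
                norm_num
              · rw [stepProb_sum_not_mem G huZ]
                have := hu Z hZ huZ
                linarith
      calc ∑ W ∈ univ.filter (fun W : Finset V => u ∈ W), stepProb G Z W * badProb G t W v +
            ∑ W ∈ univ.filter (fun W : Finset V => u ∉ W), stepProb G Z W * badProb G t W v
          ≤ (1/2)^t + (1/4) * (2 * ((t:ℝ)+1) * (1/2)^t) := add_le_add hfirst hsecond
        _ ≤ 2 * ((t:ℝ)+1+1) * (1/2)^(t+1) := by
            rw [pow_succ]
            nlinarith [hpow]
        _ = 2 * (((t:ℕ):ℝ)+1+1) * (1/2)^(t+1) := by norm_num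
      push_cast
      ring_nf
      exact le_refl _

end General

section General2

variable {V : Type} [Fintype V] [DecidableEq V] (G : SimpleGraph V) [DecidableRel G.Adj]

lemma union_bound (t : ℕ) (Z : Finset V) (T : Finset V) :
    ∑ Z' ∈ univ.filter (fun Z' : Finset V => ¬ T ⊆ Z'), pzfProb G t Z Z' ≤
      ∑ v ∈ T, badProb G t Z v := by
  induction T using Finset.induction_on with
  | empty => simp
  | @insert a T ha ih =>
    have hfe : univ.filter (fun Z' : Finset V => ¬ insert a T ⊆ Z') =
        univ.filter (fun Z' : Finset V => a ∉ Z') ∪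
        univ.filter (fun Z' : Finset V => ¬ T ⊆ Z') := by
      rw [← Finset.filter_or]
      apply Finset.filter_congr
      intro Z' _
      simp only [Finset.insert_subset_iff]
      tauto
    rw [hfe, Finset.sum_insert ha]
    have hui := Finset.sum_union_inter (s₁ := univ.filter (fun Z' : Finset V => a ∉ Z'))
      (s₂ := univ.filter (fun Z' : Finset V => ¬ T ⊆ Z')) (f := pzfProb G t Z)
    have hnn : (0:ℝ) ≤ ∑ Z' ∈ (univ.filter (fun Z' : Finset V => a ∉ Z') ∩
        univ.filter (fun Z' : Finset V => ¬ T ⊆ Z')), pzfProb G t Z Z' :=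
      Finset.sum_nonneg fun Z' _ => pzfProb_nonneg G t Z Z'
    have : ∑ Z' ∈ (univ.filter (fun Z' : Finset V => a ∉ Z') ∪
        univ.filter (fun Z' : Finset V => ¬ T ⊆ Z')), pzfProb G t Z Z' ≤
        ∑ Z' ∈ univ.filter (fun Z' : Finset V => a ∉ Z'), pzfProb G t Z Z' +
        ∑ Z' ∈ univ.filter (fun Z' : Finset V => ¬ T ⊆ Z'), pzfProb G t Z Z' := by
      linarith
    refine this.trans ?_
    have hba : ∑ Z' ∈ univ.filter (fun Z' : Finset V => a ∉ Z'), pzfProb G t Z Z' =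
        badProb G t Z a := rfl
    rw [hba]
    exact add_le_add le_rfl ih

lemma three_le_card {α : Type} [DecidableEq α] {s : Finset α} {a b c : α}
    (ha : a ∈ s) (hb : b ∈ s) (hc : c ∈ s) (hab : a ≠ b) (hac : a ≠ c) (hbc : b ≠ c) :
    3 ≤ s.card := by
  have hsub : ({a, b, c} : Finset α) ⊆ s := by
    intro x hx
    simp only [mem_insert, mem_singleton] at hx
    rcases hx with rfl | rfl | rfl <;> assumption
  have h3 : ({a, b, c} : Finset α).card = 3 := by
    rw [card_insert_of_notMem (by simp [hab, hac]), card_insert_of_notMem (by simp [hbc]),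
      card_singleton]
  rw [← h3]
  exact card_le_card hsub

lemma two_le_card {α : Type} [DecidableEq α] {s : Finset α} {a b : α}
    (ha : a ∈ s) (hb : b ∈ s) (hab : a ≠ b) : 2 ≤ s.card := by
  have hsub : ({a, b} : Finset α) ⊆ s := by
    intro x hx
    simp only [mem_insert, mem_singleton] at hx
    rcases hx with rfl | rfl <;> assumption
  have h2 : ({a, b} : Finset α).card = 2 := by
    rw [card_insert_of_notMem (by simp [hab]), card_singleton]
  rw [← h2]
  exact card_le_card hsub

lemma card3_of {S : Finset V} {u x y : V}
    (hu : u ∈ S) (hx : x ∈ S) (hy : y ∈ S) (hux : G.Adj u x) (huy : G.Adj u y) (hxy : x ≠ y) :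
    3 ≤ ((insert u (G.neighborFinset u)) ∩ S).card := by
  apply three_le_card (a := u) (b := x) (c := y)
  · exact mem_inter.2 ⟨mem_insert_self _ _, hu⟩
  · exact mem_inter.2 ⟨mem_insert_of_mem ((SimpleGraph.mem_neighborFinset _ _ _).2 hux), hx⟩
  · exact mem_inter.2 ⟨mem_insert_of_mem ((SimpleGraph.mem_neighborFinset _ _ _).2 huy), hy⟩
  · exact G.ne_of_adj hux
  · exact G.ne_of_adj huy
  · exact hxy

lemma card2_of {S : Finset V} {u w : V} (hw : w ∈ S) (huw : G.Adj u w) :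
    2 ≤ ((insert u (G.neighborFinset u)) ∩ (insert u S)).card := by
  apply two_le_card (a := u) (b := w)
  · exact mem_inter.2 ⟨mem_insert_self _ _, mem_insert_self _ _⟩
  · exact mem_inter.2 ⟨mem_insert_of_mem ((SimpleGraph.mem_neighborFinset _ _ _).2 huw),
      mem_insert_of_mem hw⟩
  · exact G.ne_of_adj huw

end General2

section Grid

lemma mem_psq_iff {n M j : ℕ} {p : Fin n × Fin n} : p ∈ psq n M j ↔
    (M ≤ p.1.val + j ∧ p.1.val ≤ M + j) ∧ (M ≤ p.2.val + j ∧ p.2.val ≤ M + j) := by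
  simp [psq]

lemma grid_adj {n : ℕ} {p q : Fin n × Fin n}
    (h : (p.1.val = q.1.val ∧ (p.2.val + 1 = q.2.val ∨ q.2.val + 1 = p.2.val)) ∨
         (p.2.val = q.2.val ∧ (p.1.val + 1 = q.1.val ∨ q.1.val + 1 = p.1.val))) :
    (gridGraph n n).Adj p q := by
  have hne : p ≠ q := by
    intro he
    subst he
    rcases h with ⟨_, h2⟩ | ⟨_, h2⟩ <;> omega
  rw [gridGraph, SimpleGraph.fromRel_adj]
  refine ⟨hne, ?_⟩
  rcases h with ⟨h1, h2 | h2⟩ | ⟨h1, h2 | h2⟩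
  · exact Or.inl (Or.inl ⟨Fin.ext h1, h2⟩)
  · exact Or.inr (Or.inl ⟨(Fin.ext h1).symm, h2⟩)
  · exact Or.inl (Or.inr ⟨Fin.ext h1, h2⟩)
  · exact Or.inr (Or.inr ⟨(Fin.ext h1).symm, h2⟩)

lemma grid_adj_val {n : ℕ} {p q : Fin n × Fin n} (h : (gridGraph n n).Adj p q) :
    (p.1.val = q.1.val ∧ (p.2.val + 1 = q.2.val ∨ q.2.val + 1 = p.2.val)) ∨
    (p.2.val = q.2.val ∧ (p.1.val + 1 = q.1.val ∨ q.1.val + 1 = p.1.val)) := by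
  rw [gridGraph, SimpleGraph.fromRel_adj] at h
  rcases h.2 with (⟨h1, h2⟩ | ⟨h1, h2⟩) | (⟨h1, h2⟩ | ⟨h1, h2⟩)
  · exact Or.inl ⟨congrArg Fin.val h1, Or.inl h2⟩
  · exact Or.inr ⟨congrArg Fin.val h1, Or.inl h2⟩
  · exact Or.inl ⟨(congrArg Fin.val h1).symm, Or.inr h2⟩
  · exact Or.inr ⟨(congrArg Fin.val h1).symm, Or.inr h2⟩

lemma grid_degree_le {n : ℕ} (p : Fin n × Fin n) : (gridGraph n n).degree p ≤ 4 := by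
  have hn : 0 < n := lt_of_le_of_lt (Nat.zero_le _) p.1.isLt
  set c1 : Fin n × Fin n := (⟨(p.1.val + 1) % n, Nat.mod_lt _ hn⟩, p.2) with hc1
  set c2 : Fin n × Fin n := (⟨p.1.val - 1, lt_of_le_of_lt (Nat.sub_le _ _) p.1.isLt⟩, p.2) with hc2
  set c3 : Fin n × Fin n := (p.1, ⟨(p.2.val + 1) % n, Nat.mod_lt _ hn⟩) with hc3
  set c4 : Fin n × Fin n := (p.1, ⟨p.2.val - 1, lt_of_le_of_lt (Nat.sub_le _ _) p.2.isLt⟩) with hc4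
  have hsub : (gridGraph n n).neighborFinset p ⊆ {c1, c2, c3, c4} := by
    intro q hq
    have h := grid_adj_val ((SimpleGraph.mem_neighborFinset _ _ _).1 hq)
    simp only [mem_insert, mem_singleton]
    rcases h with ⟨h1, h2 | h2⟩ | ⟨h1, h2 | h2⟩
    · right; right; left
      rw [hc3]
      refine Prod.ext (Fin.ext h1.symm) (Fin.ext ?_)
      simp only
      rw [h2, Nat.mod_eq_of_lt (h2 ▸ q.2.isLt)]
    · right; right; right
      rw [hc4]
      refine Prod.ext (Fin.ext h1.symm) (Fin.ext ?_)
      simp only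
      omega
    · left
      rw [hc1]
      refine Prod.ext (Fin.ext ?_) (Fin.ext h1.symm)
      simp only
      rw [h2, Nat.mod_eq_of_lt (h2 ▸ q.1.isLt)]
    · right; left
      rw [hc2]
      refine Prod.ext (Fin.ext ?_) (Fin.ext h1.symm)
      simp only
      omega
  have h4 : ({c1, c2, c3, c4} : Finset (Fin n × Fin n)).card ≤ 4 := by
    refine le_trans (Finset.card_insert_le _ _) (Nat.succ_le_succ ?_)
    refine le_trans (Finset.card_insert_le _ _) (Nat.succ_le_succ ?_)
    refine le_trans (Finset.card_insert_le _ _) (Nat.succ_le_succ ?_)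
    exact le_of_eq (Finset.card_singleton c4)
  exact le_trans (Finset.card_le_card hsub) h4

lemma geo {n M k : ℕ} (hn : n = 2*M+1) (hk : 1 ≤ k) (hkM : k+1 ≤ M)
    {v : Fin n × Fin n} (hv : v ∈ psq n M (k+1)) :
    v ∈ psq n M k ∨
    (∃ u : Fin n × Fin n, u ∈ psq n M k ∧ (gridGraph n n).Adj u v ∧
      3 ≤ ((insert u ((gridGraph n n).neighborFinset u)) ∩ psq n M k).card) ∨
    (∃ u w : Fin n × Fin n, (gridGraph n n).Adj u v ∧ (gridGraph n n).Adj w u ∧ w ∈ psq n M k ∧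
      3 ≤ ((insert w ((gridGraph n n).neighborFinset w)) ∩ psq n M k).card ∧
      2 ≤ ((insert u ((gridGraph n n).neighborFinset u)) ∩ (insert u (psq n M k))).card) := by
  obtain ⟨⟨ha1, ha2⟩, hb1, hb2⟩ := mem_psq_iff.1 hv
  by_cases hvS : v ∈ psq n M k
  · exact Or.inl hvS
  rw [mem_psq_iff] at hvS
  have hcases : (v.1.val = M+k+1 ∧ v.2.val = M+k+1) ∨ (v.1.val = M+k+1 ∧ v.2.val + (k+1) = M) ∨
      (v.1.val + (k+1) = M ∧ v.2.val = M+k+1) ∨ (v.1.val + (k+1) = M ∧ v.2.val + (k+1) = M) ∨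
      (v.1.val = M+k+1 ∧ M ≤ v.2.val + k ∧ v.2.val ≤ M+k) ∨
      (v.1.val + (k+1) = M ∧ M ≤ v.2.val + k ∧ v.2.val ≤ M+k) ∨
      (v.2.val = M+k+1 ∧ M ≤ v.1.val + k ∧ v.1.val ≤ M+k) ∨
      (v.2.val + (k+1) = M ∧ M ≤ v.1.val + k ∧ v.1.val ≤ M+k) := by omega
  rcases hcases with ⟨ha, hb⟩ | ⟨ha, hb⟩ | ⟨ha, hb⟩ | ⟨ha, hb⟩ |
    ⟨ha, hb3, hb4⟩ | ⟨ha, hb3, hb4⟩ | ⟨hb, ha3, ha4⟩ | ⟨hb, ha3, ha4⟩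
  · -- corner (M+k+1, M+k+1)
    refine Or.inr (Or.inr ⟨(v.1, ⟨M+k, by omega⟩), (⟨M+k, by omega⟩, ⟨M+k, by omega⟩),
      ?_, ?_, ?_, ?_, ?_⟩)
    · apply grid_adj; simp <;> omega
    · apply grid_adj; simp <;> omega
    · rw [mem_psq_iff]; simp <;> omega
    · exact card3_of (gridGraph n n)
        (x := (⟨M+k-1, by omega⟩, ⟨M+k, by omega⟩)) (y := (⟨M+k, by omega⟩, ⟨M+k-1, by omega⟩))
        (by rw [mem_psq_iff]; simp <;> omega) (by rw [mem_psq_iff]; simp <;> omega)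
        (by rw [mem_psq_iff]; simp <;> omega) (by apply grid_adj; simp <;> omega)
        (by apply grid_adj; simp <;> omega) (by simp [Prod.ext_iff, Fin.ext_iff] <;> omega)
    · exact card2_of (gridGraph n n) (w := (⟨M+k, by omega⟩, ⟨M+k, by omega⟩))
        (by rw [mem_psq_iff]; simp <;> omega) (by apply grid_adj; simp <;> omega)
  · -- corner (M+k+1, M-k-1)
    refine Or.inr (Or.inr ⟨(v.1, ⟨M-k, by omega⟩), (⟨M+k, by omega⟩, ⟨M-k, by omega⟩),
      ?_, ?_, ?_, ?_, ?_⟩)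
    · apply grid_adj; simp <;> omega
    · apply grid_adj; simp <;> omega
    · rw [mem_psq_iff]; simp <;> omega
    · exact card3_of (gridGraph n n)
        (x := (⟨M+k-1, by omega⟩, ⟨M-k, by omega⟩)) (y := (⟨M+k, by omega⟩, ⟨M-k+1, by omega⟩))
        (by rw [mem_psq_iff]; simp <;> omega) (by rw [mem_psq_iff]; simp <;> omega)
        (by rw [mem_psq_iff]; simp <;> omega) (by apply grid_adj; simp <;> omega)
        (by apply grid_adj; simp <;> omega) (by simp [Prod.ext_iff, Fin.ext_iff] <;> omega)
    · exact card2_of (gridGraph n n) (w := (⟨M+k, by omega⟩, ⟨M-k, by omega⟩))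
        (by rw [mem_psq_iff]; simp <;> omega) (by apply grid_adj; simp <;> omega)
  · -- corner (M-k-1, M+k+1)
    refine Or.inr (Or.inr ⟨(v.1, ⟨M+k, by omega⟩), (⟨M-k, by omega⟩, ⟨M+k, by omega⟩),
      ?_, ?_, ?_, ?_, ?_⟩)
    · apply grid_adj; simp <;> omega
    · apply grid_adj; simp <;> omega
    · rw [mem_psq_iff]; simp <;> omega
    · exact card3_of (gridGraph n n)
        (x := (⟨M-k+1, by omega⟩, ⟨M+k, by omega⟩)) (y := (⟨M-k, by omega⟩, ⟨M+k-1, by omega⟩))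
        (by rw [mem_psq_iff]; simp <;> omega) (by rw [mem_psq_iff]; simp <;> omega)
        (by rw [mem_psq_iff]; simp <;> omega) (by apply grid_adj; simp <;> omega)
        (by apply grid_adj; simp <;> omega) (by simp [Prod.ext_iff, Fin.ext_iff] <;> omega)
    · exact card2_of (gridGraph n n) (w := (⟨M-k, by omega⟩, ⟨M+k, by omega⟩))
        (by rw [mem_psq_iff]; simp <;> omega) (by apply grid_adj; simp <;> omega)
  · -- corner (M-k-1, M-k-1)
    refine Or.inr (Or.inr ⟨(v.1, ⟨M-k, by omega⟩), (⟨M-k, by omega⟩, ⟨M-k, by omega⟩),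
      ?_, ?_, ?_, ?_, ?_⟩)
    · apply grid_adj; simp <;> omega
    · apply grid_adj; simp <;> omega
    · rw [mem_psq_iff]; simp <;> omega
    · exact card3_of (gridGraph n n)
        (x := (⟨M-k+1, by omega⟩, ⟨M-k, by omega⟩)) (y := (⟨M-k, by omega⟩, ⟨M-k+1, by omega⟩))
        (by rw [mem_psq_iff]; simp <;> omega) (by rw [mem_psq_iff]; simp <;> omega)
        (by rw [mem_psq_iff]; simp <;> omega) (by apply grid_adj; simp <;> omega)
        (by apply grid_adj; simp <;> omega) (by simp [Prod.ext_iff, Fin.ext_iff] <;> omega)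
    · exact card2_of (gridGraph n n) (w := (⟨M-k, by omega⟩, ⟨M-k, by omega⟩))
        (by rw [mem_psq_iff]; simp <;> omega) (by apply grid_adj; simp <;> omega)
  · -- side x = M+k+1
    rcases (show v.2.val < M+k ∨ v.2.val = M+k by omega) with hbs | hbs
    · refine Or.inr (Or.inl ⟨(⟨M+k, by omega⟩, v.2), by rw [mem_psq_iff]; simp <;> omega,
        by apply grid_adj; simp <;> omega, ?_⟩)
      exact card3_of (gridGraph n n)
        (x := (⟨M+k-1, by omega⟩, v.2)) (y := (⟨M+k, by omega⟩, ⟨v.2.val+1, by omega⟩))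
        (by rw [mem_psq_iff]; simp <;> omega) (by rw [mem_psq_iff]; simp <;> omega)
        (by rw [mem_psq_iff]; simp <;> omega) (by apply grid_adj; simp <;> omega)
        (by apply grid_adj; simp <;> omega) (by simp [Prod.ext_iff, Fin.ext_iff] <;> omega)
    · refine Or.inr (Or.inl ⟨(⟨M+k, by omega⟩, v.2), by rw [mem_psq_iff]; simp <;> omega,
        by apply grid_adj; simp <;> omega, ?_⟩)
      exact card3_of (gridGraph n n)
        (x := (⟨M+k-1, by omega⟩, v.2)) (y := (⟨M+k, by omega⟩, ⟨v.2.val-1, by omega⟩))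
        (by rw [mem_psq_iff]; simp <;> omega) (by rw [mem_psq_iff]; simp <;> omega)
        (by rw [mem_psq_iff]; simp <;> omega) (by apply grid_adj; simp <;> omega)
        (by apply grid_adj; simp <;> omega) (by simp [Prod.ext_iff, Fin.ext_iff] <;> omega)
  · -- side x = M-k-1
    rcases (show v.2.val < M+k ∨ v.2.val = M+k by omega) with hbs | hbs
    · refine Or.inr (Or.inl ⟨(⟨M-k, by omega⟩, v.2), by rw [mem_psq_iff]; simp <;> omega,
        by apply grid_adj; simp <;> omega, ?_⟩)
      exact card3_of (gridGraph n n)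
        (x := (⟨M-k+1, by omega⟩, v.2)) (y := (⟨M-k, by omega⟩, ⟨v.2.val+1, by omega⟩))
        (by rw [mem_psq_iff]; simp <;> omega) (by rw [mem_psq_iff]; simp <;> omega)
        (by rw [mem_psq_iff]; simp <;> omega) (by apply grid_adj; simp <;> omega)
        (by apply grid_adj; simp <;> omega) (by simp [Prod.ext_iff, Fin.ext_iff] <;> omega)
    · refine Or.inr (Or.inl ⟨(⟨M-k, by omega⟩, v.2), by rw [mem_psq_iff]; simp <;> omega,
        by apply grid_adj; simp <;> omega, ?_⟩)
      exact card3_of (gridGraph n n)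
        (x := (⟨M-k+1, by omega⟩, v.2)) (y := (⟨M-k, by omega⟩, ⟨v.2.val-1, by omega⟩))
        (by rw [mem_psq_iff]; simp <;> omega) (by rw [mem_psq_iff]; simp <;> omega)
        (by rw [mem_psq_iff]; simp <;> omega) (by apply grid_adj; simp <;> omega)
        (by apply grid_adj; simp <;> omega) (by simp [Prod.ext_iff, Fin.ext_iff] <;> omega)
  · -- side y = M+k+1
    rcases (show v.1.val < M+k ∨ v.1.val = M+k by omega) with has | has
    · refine Or.inr (Or.inl ⟨(v.1, ⟨M+k, by omega⟩), by rw [mem_psq_iff]; simp <;> omega,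
        by apply grid_adj; simp <;> omega, ?_⟩)
      exact card3_of (gridGraph n n)
        (x := (v.1, ⟨M+k-1, by omega⟩)) (y := (⟨v.1.val+1, by omega⟩, ⟨M+k, by omega⟩))
        (by rw [mem_psq_iff]; simp <;> omega) (by rw [mem_psq_iff]; simp <;> omega)
        (by rw [mem_psq_iff]; simp <;> omega) (by apply grid_adj; simp <;> omega)
        (by apply grid_adj; simp <;> omega) (by simp [Prod.ext_iff, Fin.ext_iff] <;> omega)
    · refine Or.inr (Or.inl ⟨(v.1, ⟨M+k, by omega⟩), by rw [mem_psq_iff]; simp <;> omega,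
        by apply grid_adj; simp <;> omega, ?_⟩)
      exact card3_of (gridGraph n n)
        (x := (v.1, ⟨M+k-1, by omega⟩)) (y := (⟨v.1.val-1, by omega⟩, ⟨M+k, by omega⟩))
        (by rw [mem_psq_iff]; simp <;> omega) (by rw [mem_psq_iff]; simp <;> omega)
        (by rw [mem_psq_iff]; simp <;> omega) (by apply grid_adj; simp <;> omega)
        (by apply grid_adj; simp <;> omega) (by simp [Prod.ext_iff, Fin.ext_iff] <;> omega)
  · -- side y = M-k-1
    rcases (show v.1.val < M+k ∨ v.1.val = M+k by omega) with has | has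
    · refine Or.inr (Or.inl ⟨(v.1, ⟨M-k, by omega⟩), by rw [mem_psq_iff]; simp <;> omega,
        by apply grid_adj; simp <;> omega, ?_⟩)
      exact card3_of (gridGraph n n)
        (x := (v.1, ⟨M-k+1, by omega⟩)) (y := (⟨v.1.val+1, by omega⟩, ⟨M-k, by omega⟩))
        (by rw [mem_psq_iff]; simp <;> omega) (by rw [mem_psq_iff]; simp <;> omega)
        (by rw [mem_psq_iff]; simp <;> omega) (by apply grid_adj; simp <;> omega)
        (by apply grid_adj; simp <;> omega) (by simp [Prod.ext_iff, Fin.ext_iff] <;> omega)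
    · refine Or.inr (Or.inl ⟨(v.1, ⟨M-k, by omega⟩), by rw [mem_psq_iff]; simp <;> omega,
        by apply grid_adj; simp <;> omega, ?_⟩)
      exact card3_of (gridGraph n n)
        (x := (v.1, ⟨M-k+1, by omega⟩)) (y := (⟨v.1.val-1, by omega⟩, ⟨M-k, by omega⟩))
        (by rw [mem_psq_iff]; simp <;> omega) (by rw [mem_psq_iff]; simp <;> omega)
        (by rw [mem_psq_iff]; simp <;> omega) (by apply grid_adj; simp <;> omega)
        (by apply grid_adj; simp <;> omega) (by simp [Prod.ext_iff, Fin.ext_iff] <;> omega)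

lemma vertex_bound {n M k : ℕ} (hn : n = 2*M+1) (hk : 1 ≤ k) (hkM : k+1 ≤ M)
    {v : Fin n × Fin n} (hv : v ∈ psq n M (k+1)) (t : ℕ) (Z : Finset (Fin n × Fin n))
    (hZ : psq n M k ⊆ Z) :
    badProb (gridGraph n n) t Z v ≤ 2*((t:ℝ)+1)*(1/2)^t := by
  rcases geo hn hk hkM hv with hvS | ⟨u, huS, huv, hcard⟩ | ⟨u, w, huv, hwu, hwS, hc3, hc2⟩
  · rw [badProb_zero_of_mem _ _ (hZ hvS)]
    positivity
  · have hf : ∀ Z' : Finset (Fin n × Fin n), psq n M k ⊆ Z' → v ∉ Z' →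
        (3:ℝ)/4 ≤ forceProb (gridGraph n n) Z' v := by
      intro Z' hSZ hvZ
      have h := forceProb_ge (gridGraph n n) 3 (hSZ huS) huv hvZ
        (le_trans hcard (card_le_card (inter_subset_inter (subset_refl _) hSZ)))
        (grid_degree_le u)
      push_cast at h
      linarith
    have hg := badProb_le_geom (gridGraph n n) (r := 3/4) (v := v) (by norm_num) (by norm_num)
      (fun Z' => psq n M k ⊆ Z') (fun Z' W hZ' hZW => hZ'.trans hZW) hf t Z hZ
    have h14 : ((1:ℝ) - 3/4) = 1/4 := by norm_num
    rw [h14] at hg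
    have hmono : ((1:ℝ)/4)^t ≤ (1/2)^t := pow_le_pow_left₀ (by norm_num) (by norm_num) t
    have hone : ((1:ℝ)/2)^t ≤ 2*((t:ℝ)+1)*(1/2)^t := by
      have h0 : (0:ℝ) ≤ (1/2:ℝ)^t := by positivity
      have h1 : (0:ℝ) ≤ (t:ℝ) := Nat.cast_nonneg t
      nlinarith
    linarith
  · refine badProb_corner (gridGraph n n) (u := u) (psq n M k) ?_ ?_ t Z hZ
    · intro Z' hSZ huZ
      have h := forceProb_ge (gridGraph n n) 3 (hSZ hwS) hwu huZ
        (le_trans hc3 (card_le_card (inter_subset_inter (subset_refl _) hSZ)))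
        (grid_degree_le w)
      push_cast at h
      linarith
    · intro Z' hSZ huZ hvZ
      have hsub : insert u (psq n M k) ⊆ Z' := Finset.insert_subset huZ hSZ
      have h := forceProb_ge (gridGraph n n) 2 huZ huv hvZ
        (le_trans hc2 (card_le_card (inter_subset_inter (subset_refl _) hsub)))
        (grid_degree_le u)
      push_cast at h
      linarith

end Grid

/-- If at some time all vertices of a `k`-principal-square of the grid are blue, then with
probability `1 - o(1/n)` all vertices of the `(k+1)`-principal-square are blue after a
further `6 ln n` rounds. -/
theorem stmt9 : ∀ c : ℝ, 0 < c → ∃ N : ℕ, ∀ n M k : ℕ, N ≤ n → n = 2 * M + 1 →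
    1 ≤ k → k + 1 ≤ M → ∀ Z : Finset (Fin n × Fin n), psq n M k ⊆ Z →
    1 - c / n ≤
      ∑ Z' ∈ Finset.univ.filter (fun Z' : Finset (Fin n × Fin n) => psq n M (k + 1) ⊆ Z'),
        pzfProb (gridGraph n n) ⌈6 * Real.log n⌉₊ Z Z' := by
  intro c hc
  refine ⟨max 2 ⌈(28/c)^2⌉₊, ?_⟩
  intro n M k hN hn hk hkM Z hZ
  set G := gridGraph n n with hG
  set t := ⌈6 * Real.log n⌉₊ with ht
  set T := psq n M (k+1) with hT
  have hsplit := Finset.sum_filter_add_sum_filter_not (univ : Finset (Finset (Fin n × Fin n)))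
    (fun Z' => T ⊆ Z') (pzfProb G t Z)
  have htot : ∑ Z' : Finset (Fin n × Fin n), pzfProb G t Z Z' = 1 := pzfProb_sum G t Z
  have hn2 : 2 ≤ n := le_trans (le_max_left _ _) hN
  have hx : ((28/c)^2 : ℝ) ≤ (n:ℝ) := by
    have := le_trans (le_max_right 2 ⌈(28/c)^2⌉₊) hN
    exact le_trans (Nat.le_ceil _) (by exact_mod_cast this)
  have hx0 : (0:ℝ) < (n:ℝ) := by positivity
  have hx1 : (1:ℝ) ≤ (n:ℝ) := by exact_mod_cast le_trans (by norm_num) hn2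
  suffices hbad : ∑ Z' ∈ univ.filter (fun Z' : Finset (Fin n × Fin n) => ¬ T ⊆ Z'),
      pzfProb G t Z Z' ≤ c / n by linarith
  -- analytic bound
  have h2t : (0:ℝ) < 2^t := by positivity
  have hlog0 : (0:ℝ) ≤ 6 * Real.log n := by
    have := Real.log_nonneg hx1
    linarith
  have h1 : 6 * Real.log n ≤ (t:ℝ) := Nat.le_ceil _
  have h2 : (t:ℝ) < 6 * Real.log n + 1 := by
    rw [ht]
    exact Nat.ceil_lt_add_one hlog0
  have hsq1 : (1:ℝ) ≤ Real.sqrt n := by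
    rw [show (1:ℝ) = Real.sqrt 1 by rw [Real.sqrt_one]]
    exact Real.sqrt_le_sqrt hx1
  have hsq : 28/c ≤ Real.sqrt n := by
    have := Real.sqrt_le_sqrt hx
    rwa [Real.sqrt_sq (by positivity)] at this
  have hlog : Real.log n ≤ 2 * Real.sqrt n := by
    have hs0 : (0:ℝ) < Real.sqrt n := by linarith
    have := Real.log_le_sub_one_of_pos hs0
    have hls : Real.log (Real.sqrt n) = Real.log n / 2 := Real.log_sqrt (le_of_lt hx0)
    rw [hls] at this
    linarith
  have key1 : 12 * Real.log n + 4 ≤ c * n := by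
    have hms : Real.sqrt n * Real.sqrt n = (n:ℝ) := Real.mul_self_sqrt (le_of_lt hx0)
    have hsn0 : (0:ℝ) ≤ Real.sqrt n := by linarith
    have h28 : 28 ≤ Real.sqrt n * c := by
      have h := mul_le_mul_of_nonneg_right hsq (le_of_lt hc)
      rwa [div_mul_cancel₀ 28 (ne_of_gt hc)] at h
    have h28n : 28 * Real.sqrt n ≤ c * n := by
      have h := mul_le_mul_of_nonneg_right h28 hsn0
      rwa [mul_comm (Real.sqrt n) c, mul_assoc, hms] at h
    nlinarith [hlog, hsq1]
  have key2 : (n:ℝ)^4 ≤ (2:ℝ)^t := by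
    have e1 : (2:ℝ)^t = (2:ℝ)^((t:ℕ):ℝ) := (Real.rpow_natCast 2 t).symm
    have e2 : (2:ℝ)^(6 * Real.log n) ≤ (2:ℝ)^((t:ℕ):ℝ) :=
      Real.rpow_le_rpow_of_exponent_le one_le_two h1
    have e3 : (2:ℝ)^(6 * Real.log n) = (n:ℝ)^(6 * Real.log 2 : ℝ) := by
      rw [Real.rpow_def_of_pos (by norm_num : (0:ℝ) < 2), Real.rpow_def_of_pos hx0]
      ring_nf
    have e4 : (n:ℝ)^(4:ℝ) ≤ (n:ℝ)^(6 * Real.log 2 : ℝ) := by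
      apply Real.rpow_le_rpow_of_exponent_le hx1
      have := Real.log_two_gt_d9
      linarith
    have e5 : (n:ℝ)^(4:ℝ) = (n:ℝ)^(4:ℕ) := by
      rw [← Real.rpow_natCast (n:ℝ) 4]
      norm_num
    calc (n:ℝ)^4 = (n:ℝ)^(4:ℝ) := e5.symm
      _ ≤ (n:ℝ)^(6 * Real.log 2 : ℝ) := e4
      _ = (2:ℝ)^(6 * Real.log n) := e3.symm
      _ ≤ (2:ℝ)^((t:ℕ):ℝ) := e2
      _ = (2:ℝ)^t := e1.symm
  have hnum : ((n:ℝ)^2) * (2*((t:ℝ)+1)*(1/2)^t) ≤ c / n := by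
    have hx3 : (0:ℝ) < (n:ℝ)^3 := by positivity
    have ht2 : 2*((t:ℝ)+1) ≤ 12 * Real.log n + 4 := by linarith
    have hmain : (n:ℝ)^3*(2*((t:ℝ)+1)) ≤ c * 2^t := by
      calc (n:ℝ)^3*(2*((t:ℝ)+1)) ≤ (n:ℝ)^3*(c*(n:ℝ)) :=
            mul_le_mul_of_nonneg_left (ht2.trans key1) (le_of_lt hx3)
        _ = c * (n:ℝ)^4 := by ring
        _ ≤ c * 2^t := mul_le_mul_of_nonneg_left key2 (le_of_lt hc)
    rw [show ((n:ℝ)^2) * (2*((t:ℝ)+1)*(1/2)^t) = ((n:ℝ)^2*(2*((t:ℝ)+1)))/2^t by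
      field_simp; rw [← mul_pow]; norm_num]
    rw [div_le_div_iff₀ h2t hx0]
    calc (n:ℝ)^2*(2*((t:ℝ)+1))*(n:ℝ) = (n:ℝ)^3*(2*((t:ℝ)+1)) := by ring
      _ ≤ c * 2^t := hmain
  calc ∑ Z' ∈ univ.filter (fun Z' : Finset (Fin n × Fin n) => ¬ T ⊆ Z'), pzfProb G t Z Z'
      ≤ ∑ v ∈ T, badProb G t Z v := union_bound G t Z T
    _ ≤ ∑ _v ∈ T, 2*((t:ℝ)+1)*(1/2)^t := by
        apply Finset.sum_le_sum
        intro v hvT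
        exact vertex_bound hn hk hkM hvT t Z hZ
    _ = T.card * (2*((t:ℝ)+1)*(1/2)^t) := by rw [Finset.sum_const, nsmul_eq_mul]
    _ ≤ ((n:ℝ)^2) * (2*((t:ℝ)+1)*(1/2)^t) := by
        apply mul_le_mul_of_nonneg_right _ (by positivity)
        have hc1 : T.card ≤ Fintype.card (Fin n × Fin n) := Finset.card_le_univ T
        have hc2 : Fintype.card (Fin n × Fin n) = n * n := by simp
        have : (T.card : ℝ) ≤ ((n*n : ℕ) : ℝ) := by exact_mod_cast le_trans hc1 (le_of_eq hc2)
        calc (T.card : ℝ) ≤ ((n*n : ℕ) : ℝ) := this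
          _ = (n:ℝ)^2 := by push_cast; ring
    _ ≤ c / n := hnum
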